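/- Suppose the homogeneous polynomial F of degree d satisfies XF = κF for the vector field X = Σ λ_i Z_i ∂/∂Z_i (i.e. F is an eigenvector of X), and the hypersurface {F = 0} is a normal variety. Then for each coordinate index i ∈ {0,…,n}, the minimum over all monomials Z^{α^j} of F of the exponent α^j_i satisfies min_j α^j_i ∈ {0, 1}; consequently the function φ_i(x) := −κ + (min_j α^j_i) x has φ_i'(x)(φ_i'(x) − 1) = 0 for all x. -/

import Mathlib

open MvPolynomial

/-- if the homogeneous polynomial `F` of degree `d` is an eigenvector of
`X = Σ λ_k Z_k ∂/∂Z_k` (every monomial `Z^{α^j}` of `F` satisfies `Σ_k λ_k α^j_k = κ`)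
and the hypersurface `{F = 0}` is normal (encoded: its homogeneous coordinate ring is an
integrally closed domain), then for every coordinate `i` the minimal exponent
`m_i = min_j α^j_i` is `0` or `1`; consequently the slope `m_i` of
`φ_i(x) = -κ + m_i x` satisfies `φ_i'(φ_i' - 1) = 0`. -/
theorem normal_variety_min_exponent
    (n d : ℕ) (F : MvPolynomial (Fin (n + 1)) ℂ) (hF : F ≠ 0)
    (hhom : F.IsHomogeneous d)
    (lam : Fin (n + 1) → ℤ) (κ : ℤ) (hlam : ∑ k, lam k = 0)
    (heig : ∀ s ∈ F.support, ∑ k, lam k * (s k : ℤ) = κ)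
    (hdom : IsDomain (MvPolynomial (Fin (n + 1)) ℂ ⧸ Ideal.span {F}))
    (hnormal : IsIntegrallyClosed (MvPolynomial (Fin (n + 1)) ℂ ⧸ Ideal.span {F})) :
    ∀ i : Fin (n + 1),
      ((F.support.inf' (MvPolynomial.support_nonempty.mpr hF) fun s => s i) = 0 ∨ (F.support.inf' (MvPolynomial.support_nonempty.mpr hF) fun s => s i) = 1) ∧
      ((F.support.inf' (MvPolynomial.support_nonempty.mpr hF) fun s => s i : ℝ) * ((F.support.inf' (MvPolynomial.support_nonempty.mpr hF) fun s => s i : ℝ) - 1) = 0) := by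
  intro i
  set m := F.support.inf' (MvPolynomial.support_nonempty.mpr hF) fun s => s i with hm
  have key : m = 0 ∨ m = 1 := by
    by_contra h
    push_neg at h
    have hm2 : 2 ≤ m := by omega
    -- every monomial of F has exponent of Z_i at least 2, hence Z_i^2 ∣ F
    have hdvd : (monomial (Finsupp.single i 2) (1 : ℂ)) ∣ F := by
      rw [monomial_one_dvd_iff_modMonomial_eq_zero]
      ext s
      by_cases hs : Finsupp.single i 2 ≤ s
      · simp [coeff_modMonomial_of_le _ hs]
      · rw [coeff_modMonomial_of_not_le _ hs, MvPolynomial.coeff_zero]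
        by_contra hc
        have hsupp : s ∈ F.support := by
          simpa [MvPolynomial.mem_support_iff] using hc
        have : m ≤ s i := Finset.inf'_le _ hsupp
        exact hs (by
          intro j
          rcases eq_or_ne j i with rfl | hj
          · simpa using le_trans hm2 this
          · simp [Finsupp.single_apply, hj.symm])
    -- F is prime since the quotient is a domain
    have hprime : Prime F := by
      rw [← Ideal.span_singleton_prime hF, ← Ideal.Quotient.isDomain_iff_prime]
      exact hdom
    have hXi : ¬ IsUnit (X i : MvPolynomial (Fin (n + 1)) ℂ) := by
      intro h
      have := h.map (MvPolynomial.eval (0 : Fin (n + 1) → ℂ))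
      simp at this
    obtain ⟨G, hG⟩ := hdvd
    have hGfact : F = X i * (X i * G) := by
      rw [hG]
      rw [← MvPolynomial.X_pow_eq_monomial, sq, mul_assoc]
    rcases hprime.irreducible.isUnit_or_isUnit hGfact with h1 | h2
    · exact hXi h1
    · exact hXi (isUnit_of_mul_isUnit_left h2)
  refine ⟨key, ?_⟩
  have hcast : (F.support.inf' (MvPolynomial.support_nonempty.mpr hF) fun s => ((s i : ℕ) : ℝ))
      = ((m : ℕ) : ℝ) := by
    have := Finset.apply_inf'_eq_inf'_comp (MvPolynomial.support_nonempty.mpr hF)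
      (f := fun s : (Fin (n+1)) →₀ ℕ => s i) (Nat.cast : ℕ → ℝ)
      (fun x y => by
        rcases le_total x y with h | h <;>
          simp [min_def, h, Nat.cast_le.mpr h] <;> omega)
    exact this.symm
  rw [hcast]
  rcases key with h | h <;> rw [h] <;> norm_num
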